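/- If c > 0 and δ > 0 are constants such that E[(W_1 − c)^+] ≤ δ, then the process Z_n = max(M_n, c) − nδ, n ≥ 0, is a supermartingale with respect to the filtration (F_n). -/

import Mathlib

open MeasureTheory ProbabilityTheory

/-- With `(W_n)_{n ≥ 1}` i.i.d. nonnegative integrable, `ℱ n = σ(W_1, …, W_n)`,
`M 0 = 0`, `M n = max_{1 ≤ k ≤ n} W k`: if `c > 0`, `δ > 0` and `E[(W_1 − c)⁺] ≤ δ`, then
`Z n = max(M n, c) − n·δ` is a supermartingale with respect to `ℱ`. -/
theorem maxIID_sub_supermartingale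
    {Ω : Type*} {m : MeasurableSpace Ω} {P : Measure Ω} [IsProbabilityMeasure P]
    (W : ℕ → Ω → ℝ)
    (hW_meas : ∀ n, Measurable (W n))
    (hW_indep : iIndepFun (fun n : ℕ => W (n + 1)) P)
    (hW_ident : ∀ n, 1 ≤ n → IdentDistrib (W n) (W 1) P P)
    (hW_nonneg : ∀ n ω, 1 ≤ n → 0 ≤ W n ω)
    (hW_int : ∀ n, 1 ≤ n → Integrable (W n) P)
    (ℱ : Filtration ℕ m)
    (hℱ : ∀ n, ℱ n = ⨆ i ∈ Set.Icc 1 n, MeasurableSpace.comap (W i) inferInstance)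
    (M : ℕ → Ω → ℝ)
    (hM0 : M 0 = fun _ => 0)
    (hM : ∀ n, M (n + 1) = fun ω => max (M n ω) (W (n + 1) ω))
    (c δ : ℝ) (hc : 0 < c) (hδ : 0 < δ)
    (hWc : ∫ ω, max (W 1 ω - c) 0 ∂P ≤ δ) :
    Supermartingale (fun n ω => max (M n ω) c - n * δ) ℱ P := by
  -- W i is ℱ n measurable for 1 ≤ i ≤ n
  have hWF : ∀ i n, 1 ≤ i → i ≤ n → Measurable[ℱ n] (W i) := by
    intro i n h1 h2
    have hle : MeasurableSpace.comap (W i) inferInstance ≤ ℱ n := by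
      rw [hℱ n]
      exact le_biSup (fun i => MeasurableSpace.comap (W i) inferInstance) (Set.mem_Icc.2 ⟨h1, h2⟩)
    exact (comap_measurable (W i)).mono hle le_rfl
  -- M n is ℱ n measurable
  have hMF : ∀ n, Measurable[ℱ n] (M n) := by
    intro n
    induction n with
    | zero => rw [hM0]; exact measurable_const
    | succ k ih =>
      rw [hM k]
      exact (ih.mono (ℱ.mono k.le_succ) le_rfl).max (hWF (k+1) (k+1) k.succ_pos le_rfl)
  -- M n is integrable
  have hMint : ∀ n, Integrable (M n) P := by
    intro n
    induction n with
    | zero => rw [hM0]; exact integrable_const 0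
    | succ k ih =>
      rw [hM k]
      exact ih.sup (hW_int (k+1) k.succ_pos)
  have hZmeas : ∀ n, StronglyMeasurable[ℱ n] (fun ω => max (M n ω) c - n * δ) :=
    fun n => (((hMF n).max measurable_const).sub measurable_const).stronglyMeasurable
  have hZint : ∀ n, Integrable (fun ω => max (M n ω) c - n * δ) P :=
    fun n => ((hMint n).sup (integrable_const c)).sub (integrable_const _)
  refine supermartingale_nat (fun n => hZmeas n) hZint (fun n => ?_)
  -- independence of W (n+1) from ℱ n
  set g : Ω → ℝ := fun ω => max (W (n+1) ω - c) 0 with hg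
  have hgmeas : Measurable g := ((hW_meas (n+1)).sub measurable_const).max measurable_const
  have hgint : Integrable g P := ((hW_int (n+1) n.succ_pos).sub (integrable_const c)).pos_part
  have hFeq : (⨆ k ∈ {k : ℕ | k < n}, MeasurableSpace.comap (W (k+1)) inferInstance) = ℱ n := by
    rw [hℱ n]
    apply le_antisymm
    · refine iSup₂_le fun k hk => ?_
      exact le_biSup (fun i => MeasurableSpace.comap (W i) inferInstance)
        (Set.mem_Icc.2 ⟨k.succ_pos, hk⟩)
    · refine iSup₂_le fun i hi => ?_
      obtain ⟨h1, h2⟩ := Set.mem_Icc.1 hi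
      obtain ⟨k, rfl⟩ := Nat.exists_eq_succ_of_ne_zero (by omega : i ≠ 0)
      exact le_biSup (fun k => MeasurableSpace.comap (W (k+1)) inferInstance)
        (show k ∈ {k : ℕ | k < n} by simpa using by omega)
  have hindep : Indep (MeasurableSpace.comap (W (n+1)) inferInstance) (ℱ n) P := by
    rw [← hFeq]
    have := indep_iSup_of_disjoint (fun k => (hW_meas (k+1)).comap_le) hW_indep
      (S := {n}) (T := {k : ℕ | k < n}) (by simp)
    simpa using this
  have hgcond : P[g | ℱ n] =ᵐ[P] fun _ => ∫ ω, g ω ∂P := by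
    refine condExp_indep_eq (hW_meas (n+1)).comap_le (ℱ.le n) ?_ hindep
    have : Measurable[MeasurableSpace.comap (W (n+1)) inferInstance] (W (n+1)) :=
      comap_measurable (W (n+1))
    exact (((this.sub measurable_const).max measurable_const)).stronglyMeasurable
  have hgid : ∫ ω, g ω ∂P = ∫ ω, max (W 1 ω - c) 0 ∂P := by
    refine IdentDistrib.integral_eq ?_
    exact (hW_ident (n+1) n.succ_pos).comp
      ((measurable_id.sub measurable_const).max measurable_const)
  -- pointwise bound
  have hpt : ∀ ω, max (M (n+1) ω) c - (↑(n+1) : ℝ) * δ ≤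
      (max (M n ω) c - ↑n * δ) + (g ω - δ) := by
    intro ω
    have h0 : (0:ℝ) ≤ max (W (n+1) ω - c) 0 := le_max_right _ _
    have h1 : W (n+1) ω - c ≤ max (W (n+1) ω - c) 0 := le_max_left _ _
    have h2 : M n ω ≤ max (M n ω) c := le_max_left _ _
    have h3 : c ≤ max (M n ω) c := le_max_right _ _
    have key : max (M (n+1) ω) c ≤ max (M n ω) c + max (W (n+1) ω - c) 0 := by
      simp only [hM n]
      exact max_le (max_le (by linarith) (by linarith)) (by linarith)
    have hgw : g ω = max (W (n+1) ω - c) 0 := rfl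
    push_cast
    rw [hgw]
    linarith
  -- conditional expectation chain
  calc P[fun ω => max (M (n+1) ω) c - ↑(n+1) * δ | ℱ n]
      ≤ᵐ[P] P[fun ω => (max (M n ω) c - ↑n * δ) + (g ω - δ) | ℱ n] := by
        refine condExp_mono (hZint (n+1)) ((hZint n).add (hgint.sub (integrable_const δ)))
          (Filter.Eventually.of_forall hpt)
    _ =ᵐ[P] fun ω => (max (M n ω) c - ↑n * δ) + ((∫ ω, g ω ∂P) - δ) := by
        refine (condExp_add (hZint n) (hgint.sub (integrable_const δ)) (ℱ n)).trans ?_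
        have h1 : P[fun ω => max (M n ω) c - ↑n * δ | ℱ n]
            = fun ω => max (M n ω) c - ↑n * δ :=
          condExp_of_stronglyMeasurable (ℱ.le n) (hZmeas n) (hZint n)
        have h2 : P[g - (fun _ => δ) | ℱ n] =ᵐ[P] fun _ => (∫ ω, g ω ∂P) - δ := by
          refine (condExp_sub hgint (integrable_const δ) (ℱ n)).trans ?_
          filter_upwards [hgcond] with ω hω
          rw [Pi.sub_apply, hω, condExp_const (ℱ.le n)]
        rw [h1]
        filter_upwards [h2] with ω hω
        rw [Pi.add_apply, hω]
    _ ≤ᵐ[P] fun ω => max (M n ω) c - ↑n * δ := by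
        refine Filter.Eventually.of_forall fun ω => ?_
        have : (∫ ω, g ω ∂P) - δ ≤ 0 := by rw [hgid]; linarith
        dsimp only
        linarith
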